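/- Let a, b, k, Λ, λ be real numbers with a > 0 and b + k² + Λ = 0, and let N(x,t) = k·x − Λ·t, z(x,t) = a·exp(−i·N(x,t)), m(x,t) = b. Let μ, ν ∈ ℂ and let r ∈ ℂ³ be a nonzero common eigenvector of the matrices A₁ = [[λ, 0, 1], [i·a, i·k, 0], [b, a, −λ]] and A₂ = [[−(1/3)·i·λ², −i·a, 0], [a·(λ + i·k), (2/3)·i·λ² − i·Λ, a], [a², a·(k + i·λ), −(1/3)·i·λ²]] with A₁·r = i·μ·r and A₂·r = i·ν·r. Let P(x,t) = diag(1, exp(−i·N(x,t)), 1). Then φ(x,t) := exp(i·(μ·x + ν·t))·P(x,t)·r satisfies ∂ₓφ = U·φ and ∂ₜφ = V·φ, where U and V are the Lax matrices built from λ and this plane wave pair (z, m). -/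

import Mathlib

open Matrix Complex

noncomputable section

/-- Partial derivative in the first (spatial) variable. -/
def pdx (f : ℝ × ℝ → ℂ) (p : ℝ × ℝ) : ℂ := deriv (fun s => f (s, p.2)) p.1

/-- The spatial Lax matrix of the Yajima–Oikawa system. -/
def LaxU (lam : ℂ) (z : ℝ × ℝ → ℂ) (m : ℝ × ℝ → ℝ) (p : ℝ × ℝ) :
    Matrix (Fin 3) (Fin 3) ℂ :=
  !![lam, 0, 1;
     Complex.I * z p, 0, 0;
     (m p : ℂ), (starRingEnd ℂ) (z p), -lam]

/-- The temporal Lax matrix of the Yajima–Oikawa system. -/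
def LaxV (lam : ℂ) (z : ℝ × ℝ → ℂ) (p : ℝ × ℝ) :
    Matrix (Fin 3) (Fin 3) ℂ :=
  !![-(1/3) * Complex.I * lam ^ 2, -Complex.I * (starRingEnd ℂ) (z p), 0;
     lam * z p - pdx z p, (2/3) * Complex.I * lam ^ 2, z p;
     ((‖z p‖) ^ 2 : ℝ),
       Complex.I * (lam * (starRingEnd ℂ) (z p) - pdx (fun q => (starRingEnd ℂ) (z q)) p),
       -(1/3) * Complex.I * lam ^ 2]

lemma expDeriv (c d : ℂ) (x : ℝ) :
    HasDerivAt (fun s : ℝ => Complex.exp (c * s + d)) (c * Complex.exp (c * x + d)) x := by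
  have h : HasDerivAt (fun s : ℝ => c * (s : ℂ) + d) c x := by
    simpa using ((Complex.ofRealCLM.hasDerivAt (x := x)).const_mul c).add_const d
  simpa [mul_comm] using h.cexp


set_option maxHeartbeats 1600000 in
/-- The common eigenvector of the separated matrices yields an eigenfunction
`φ = exp(i(μx + νt))·P·r` of the Yajima–Oikawa Lax pair at the plane wave. -/
theorem planeWave_eigenfunction (a b k Λ lam : ℝ) (ha : 0 < a)
    (hdisp : b + k ^ 2 + Λ = 0)
    (N : ℝ × ℝ → ℝ) (hN : N = fun p => k * p.1 - Λ * p.2)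
    (z : ℝ × ℝ → ℂ) (hz : z = fun p => (a : ℂ) * Complex.exp (-Complex.I * (N p : ℂ)))
    (m : ℝ × ℝ → ℝ) (hm : m = fun _ => b)
    (μ ν : ℂ) (r : Fin 3 → ℂ) (hr : r ≠ 0)
    (A₁ A₂ : Matrix (Fin 3) (Fin 3) ℂ)
    (hA₁ : A₁ = !![(lam : ℂ), 0, 1;
                   Complex.I * a, Complex.I * k, 0;
                   (b : ℂ), (a : ℂ), -(lam : ℂ)])
    (hA₂ : A₂ = !![-(1/3) * Complex.I * (lam : ℂ) ^ 2, -Complex.I * (a : ℂ), 0;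
                   (a : ℂ) * ((lam : ℂ) + Complex.I * k),
                     (2/3) * Complex.I * (lam : ℂ) ^ 2 - Complex.I * (Λ : ℂ), (a : ℂ);
                   (a : ℂ) ^ 2, (a : ℂ) * ((k : ℂ) + Complex.I * lam),
                     -(1/3) * Complex.I * (lam : ℂ) ^ 2])
    (heig₁ : A₁.mulVec r = (Complex.I * μ) • r)
    (heig₂ : A₂.mulVec r = (Complex.I * ν) • r)
    (P : ℝ × ℝ → Matrix (Fin 3) (Fin 3) ℂ)
    (hP : P = fun p => Matrix.diagonal ![1, Complex.exp (-Complex.I * (N p : ℂ)), 1])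
    (φ : ℝ × ℝ → Fin 3 → ℂ)
    (hφ : φ = fun p => Complex.exp (Complex.I * (μ * p.1 + ν * p.2)) • (P p).mulVec r) :
    ∀ p : ℝ × ℝ,
      (∀ i : Fin 3, deriv (fun s => φ (s, p.2) i) p.1 = ((LaxU lam z m p).mulVec (φ p)) i) ∧
      (∀ i : Fin 3, deriv (fun s => φ (p.1, s) i) p.2 = ((LaxV lam z p).mulVec (φ p)) i) := by
  subst hA₁ hA₂
  -- eigenvalue equations, componentwise
  have e10 : (lam : ℂ) * r 0 + r 2 = Complex.I * μ * r 0 := by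
    have := congrFun heig₁ 0
    simp [Matrix.mulVec, dotProduct, Fin.sum_univ_three] at this
    linear_combination this
  have e11 : Complex.I * a * r 0 + Complex.I * k * r 1 = Complex.I * μ * r 1 := by
    have := congrFun heig₁ 1
    simp [Matrix.mulVec, dotProduct, Fin.sum_univ_three] at this
    linear_combination this
  have e12 : (b : ℂ) * r 0 + (a : ℂ) * r 1 - (lam : ℂ) * r 2 = Complex.I * μ * r 2 := by
    have := congrFun heig₁ 2
    simp [Matrix.mulVec, dotProduct, Fin.sum_univ_three] at this
    linear_combination this
  have f10 : -(1/3) * Complex.I * (lam : ℂ) ^ 2 * r 0 - Complex.I * a * r 1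
      = Complex.I * ν * r 0 := by
    have := congrFun heig₂ 0
    simp [Matrix.mulVec, dotProduct, Fin.sum_univ_three] at this
    linear_combination this
  have f11 : (a : ℂ) * ((lam : ℂ) + Complex.I * k) * r 0
      + ((2/3) * Complex.I * (lam : ℂ) ^ 2 - Complex.I * Λ) * r 1 + (a : ℂ) * r 2
      = Complex.I * ν * r 1 := by
    have := congrFun heig₂ 1
    simp [Matrix.mulVec, dotProduct, Fin.sum_univ_three] at this
    linear_combination this
  have f12 : (a : ℂ) ^ 2 * r 0 + (a : ℂ) * ((k : ℂ) + Complex.I * lam) * r 1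
      - (1/3) * Complex.I * (lam : ℂ) ^ 2 * r 2 = Complex.I * ν * r 2 := by
    have := congrFun heig₂ 2
    simp [Matrix.mulVec, dotProduct, Fin.sum_univ_three] at this
    linear_combination this
  intro p
  -- spatial derivative of z and conj z
  have hpz : pdx z p
      = (a : ℂ) * (-(Complex.I * k)
          * Complex.exp (-(Complex.I * k) * p.1 + Complex.I * Λ * p.2)) := by
    unfold pdx
    rw [show (fun s : ℝ => z (s, p.2))
        = (fun s : ℝ => (a : ℂ)
            * Complex.exp (-(Complex.I * k) * (s : ℂ) + Complex.I * Λ * (p.2 : ℂ))) from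
      funext fun s => by simp [hz, hN]; push_cast; ring_nf; try tauto]
    have := ((expDeriv (-(Complex.I * k)) (Complex.I * Λ * p.2) p.1).const_mul (a : ℂ)).deriv
    simpa using this
  have hpzc : pdx (fun q => (starRingEnd ℂ) (z q)) p
      = (a : ℂ) * ((Complex.I * k)
          * Complex.exp ((Complex.I * k) * p.1 + -(Complex.I * Λ) * p.2)) := by
    unfold pdx
    rw [show (fun s : ℝ => (starRingEnd ℂ) (z (s, p.2)))
        = (fun s : ℝ => (a : ℂ)
            * Complex.exp ((Complex.I * k) * (s : ℂ) + -(Complex.I * Λ) * (p.2 : ℂ))) from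
      funext fun s => by
        simp [hz, hN, _root_.map_mul, Complex.conj_ofReal, ← Complex.exp_conj, map_neg,
          Complex.conj_I]
        push_cast; ring_nf; try tauto]
    have := ((expDeriv (Complex.I * k) (-(Complex.I * Λ) * p.2) p.1).const_mul (a : ℂ)).deriv
    simpa using this
  have hzz : (((‖z p‖) ^ 2 : ℝ) : ℂ) = (a : ℂ) ^ 2 := by
    have hre : (-Complex.I * ((N p : ℝ) : ℂ)).re = 0 := by simp
    simp [hz, _root_.map_mul, Complex.norm_exp, Complex.norm_real, hre]
    try push_cast [sq_abs]
    try ring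
  constructor
  · intro i
    fin_cases i
    · show deriv (fun s => φ (s, p.2) (0 : Fin 3)) p.1 = ((LaxU (lam : ℂ) z m p).mulVec (φ p)) (0 : Fin 3)
      rw [show (fun s : ℝ => φ (s, p.2) 0)
          = (fun s : ℝ => Complex.exp (Complex.I * μ * (s : ℂ) + Complex.I * ν * (p.2 : ℂ))
              * r 0) from
        funext fun s => by simp [hφ, hP, hN, Matrix.mulVec_diagonal]; push_cast; ring_nf; try tauto,
        ((expDeriv (Complex.I * μ) (Complex.I * ν * p.2) p.1).mul_const (r 0)).deriv]
      simp [LaxU, hz, hm, hN, hφ, hP, Matrix.mulVec, dotProduct, Fin.sum_univ_three,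
        Matrix.mulVec_diagonal]
      linear_combination (norm := (push_cast; ring_nf; try simp only [Complex.exp_add, Complex.exp_sub, Complex.exp_neg]; try field_simp; try ring_nf; try ring1))
        -Complex.exp (Complex.I * μ * (p.1 : ℂ) + Complex.I * ν * (p.2 : ℂ)) * e10
    · show deriv (fun s => φ (s, p.2) (1 : Fin 3)) p.1 = ((LaxU (lam : ℂ) z m p).mulVec (φ p)) (1 : Fin 3)
      rw [show (fun s : ℝ => φ (s, p.2) 1)
          = (fun s : ℝ => Complex.exp (Complex.I * μ * (s : ℂ) + Complex.I * ν * (p.2 : ℂ))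
              * (Complex.exp (-(Complex.I * k) * (s : ℂ) + Complex.I * Λ * (p.2 : ℂ)) * r 1)) from
        funext fun s => by simp [hφ, hP, hN, Matrix.mulVec_diagonal]; push_cast; ring_nf; try tauto,
        ((expDeriv (Complex.I * μ) (Complex.I * ν * p.2) p.1).fun_mul
          ((expDeriv (-(Complex.I * k)) (Complex.I * Λ * p.2) p.1).mul_const (r 1))).deriv]
      simp [LaxU, hz, hm, hN, hφ, hP, Matrix.mulVec, dotProduct, Fin.sum_univ_three,
        Matrix.mulVec_diagonal]
      linear_combination (norm := (push_cast; ring_nf; try simp only [Complex.exp_add, Complex.exp_sub, Complex.exp_neg]; try field_simp; try ring_nf; try ring1))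
        -(Complex.exp (Complex.I * μ * (p.1 : ℂ) + Complex.I * ν * (p.2 : ℂ))
          * Complex.exp (-(Complex.I * k) * (p.1 : ℂ) + Complex.I * Λ * (p.2 : ℂ))) * e11
    · show deriv (fun s => φ (s, p.2) (2 : Fin 3)) p.1 = ((LaxU (lam : ℂ) z m p).mulVec (φ p)) (2 : Fin 3)
      rw [show (fun s : ℝ => φ (s, p.2) 2)
          = (fun s : ℝ => Complex.exp (Complex.I * μ * (s : ℂ) + Complex.I * ν * (p.2 : ℂ))
              * r 2) from
        funext fun s => by simp [hφ, hP, hN, Matrix.mulVec_diagonal]; push_cast; ring_nf; try tauto,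
        ((expDeriv (Complex.I * μ) (Complex.I * ν * p.2) p.1).mul_const (r 2)).deriv]
      simp [LaxU, hz, hm, hN, hφ, hP, Matrix.mulVec, dotProduct, Fin.sum_univ_three,
        Matrix.mulVec_diagonal, _root_.map_mul, Complex.conj_ofReal, ← Complex.exp_conj, map_neg,
        Complex.conj_I]
      linear_combination (norm := (push_cast; ring_nf; try simp only [Complex.exp_add, Complex.exp_sub, Complex.exp_neg]; try field_simp; try ring_nf; try ring1))
        -Complex.exp (Complex.I * μ * (p.1 : ℂ) + Complex.I * ν * (p.2 : ℂ)) * e12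
  · intro i
    fin_cases i
    · show deriv (fun s => φ (p.1, s) (0 : Fin 3)) p.2 = ((LaxV (lam : ℂ) z p).mulVec (φ p)) (0 : Fin 3)
      rw [show (fun s : ℝ => φ (p.1, s) 0)
          = (fun s : ℝ => Complex.exp (Complex.I * ν * (s : ℂ) + Complex.I * μ * (p.1 : ℂ))
              * r 0) from
        funext fun s => by simp [hφ, hP, hN, Matrix.mulVec_diagonal]; push_cast; ring_nf; try tauto,
        ((expDeriv (Complex.I * ν) (Complex.I * μ * p.1) p.2).mul_const (r 0)).deriv]
      simp only [LaxV]
      rw [hpz, hpzc, hzz]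
      simp [hz, hN, hφ, hP, Matrix.mulVec, dotProduct, Fin.sum_univ_three,
        Matrix.mulVec_diagonal, _root_.map_mul, Complex.conj_ofReal, ← Complex.exp_conj, map_neg,
        Complex.conj_I]
      linear_combination (norm := (push_cast; ring_nf; try simp only [Complex.exp_add, Complex.exp_sub, Complex.exp_neg]; try field_simp; try ring_nf; try ring1))
        -Complex.exp (Complex.I * μ * (p.1 : ℂ) + Complex.I * ν * (p.2 : ℂ)) * f10
    · show deriv (fun s => φ (p.1, s) (1 : Fin 3)) p.2 = ((LaxV (lam : ℂ) z p).mulVec (φ p)) (1 : Fin 3)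
      rw [show (fun s : ℝ => φ (p.1, s) 1)
          = (fun s : ℝ => Complex.exp (Complex.I * ν * (s : ℂ) + Complex.I * μ * (p.1 : ℂ))
              * (Complex.exp (Complex.I * Λ * (s : ℂ) + -(Complex.I * k) * (p.1 : ℂ)) * r 1)) from
        funext fun s => by simp [hφ, hP, hN, Matrix.mulVec_diagonal]; push_cast; ring_nf; try tauto,
        ((expDeriv (Complex.I * ν) (Complex.I * μ * p.1) p.2).fun_mul
          ((expDeriv (Complex.I * Λ) (-(Complex.I * k) * p.1) p.2).mul_const (r 1))).deriv]
      simp only [LaxV]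
      rw [hpz, hpzc, hzz]
      simp [hz, hN, hφ, hP, Matrix.mulVec, dotProduct, Fin.sum_univ_three,
        Matrix.mulVec_diagonal, _root_.map_mul, Complex.conj_ofReal, ← Complex.exp_conj, map_neg,
        Complex.conj_I]
      linear_combination (norm := (push_cast; ring_nf; try simp only [Complex.exp_add, Complex.exp_sub, Complex.exp_neg]; try field_simp; try ring_nf; try ring1))
        -(Complex.exp (Complex.I * μ * (p.1 : ℂ) + Complex.I * ν * (p.2 : ℂ))
          * Complex.exp (-(Complex.I * k) * (p.1 : ℂ) + Complex.I * Λ * (p.2 : ℂ))) * f11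
    · show deriv (fun s => φ (p.1, s) (2 : Fin 3)) p.2 = ((LaxV (lam : ℂ) z p).mulVec (φ p)) (2 : Fin 3)
      rw [show (fun s : ℝ => φ (p.1, s) 2)
          = (fun s : ℝ => Complex.exp (Complex.I * ν * (s : ℂ) + Complex.I * μ * (p.1 : ℂ))
              * r 2) from
        funext fun s => by simp [hφ, hP, hN, Matrix.mulVec_diagonal]; push_cast; ring_nf; try tauto,
        ((expDeriv (Complex.I * ν) (Complex.I * μ * p.1) p.2).mul_const (r 2)).deriv]
      simp only [LaxV]
      rw [hpz, hpzc, hzz]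
      simp [hz, hN, hφ, hP, Matrix.mulVec, dotProduct, Fin.sum_univ_three,
        Matrix.mulVec_diagonal, _root_.map_mul, Complex.conj_ofReal, ← Complex.exp_conj, map_neg,
        Complex.conj_I]
      linear_combination (norm := (push_cast; ring_nf; try simp only [Complex.exp_add, Complex.exp_sub, Complex.exp_neg, Complex.I_sq]; try field_simp; try ring_nf; try ring1))
        -Complex.exp (Complex.I * μ * (p.1 : ℂ) + Complex.I * ν * (p.2 : ℂ)) * f12


end
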